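/- Let A be a commutative Noetherian ring, let Γ be a linearly ordered set, and let f : Spec A → Γ be a function on the prime spectrum of A with its Zariski topology. Suppose: (i) for all points y and all x in the closure of {y}, f(x) ≥ f(y); and (ii) for every y, the set {x ∈ closure{y} : f(x) ≤ f(y)} contains a nonempty open subset of the irreducible closed set closure{y}. Then f is upper semicontinuous: for every γ ∈ Γ the set {x ∈ Spec A : f(x) ≥ γ} is Zariski-closed. (Paper's Claim VI.k, Dade's criterion for upper semicontinuity.) -/

import Mathlib

/-- **Paper's Claim VI.k** (Dade's criterion for upper semicontinuity). Let `A` be a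
commutative Noetherian ring, `Γ` a linear order and `f : Spec A → Γ`. If (i) `f` increases
under specialization, and (ii) for every point `y` the locus `{x ∈ closure {y} | f x ≤ f y}`
contains a nonempty open subset of the irreducible closed set `closure {y}`, then `f` is
upper semicontinuous: every superlevel set `{f ≥ γ}` is Zariski-closed. -/
theorem claim_VI_k (A : Type*) [CommRing A] [IsNoetherianRing A]
    (Γ : Type*) [LinearOrder Γ] (f : PrimeSpectrum A → Γ)
    (h1 : ∀ y x : PrimeSpectrum A, x ∈ closure ({y} : Set (PrimeSpectrum A)) → f y ≤ f x)
    (h2 : ∀ y : PrimeSpectrum A, ∃ U : Set (PrimeSpectrum A), IsOpen U ∧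
      (closure ({y} : Set (PrimeSpectrum A)) ∩ U).Nonempty ∧
      ∀ x ∈ closure ({y} : Set (PrimeSpectrum A)) ∩ U, f x ≤ f y) :
    ∀ γ : Γ, IsClosed {x : PrimeSpectrum A | γ ≤ f x} := by
  intro γ
  have key : ∀ Z : TopologicalSpace.Closeds (PrimeSpectrum A),
      IsClosed ({x : PrimeSpectrum A | γ ≤ f x} ∩ Z) := by
    intro Z
    induction Z using WellFoundedLT.induction with
    | _ Z IH =>
    obtain ⟨S, hSf, hSirr, hZ⟩ :=
      TopologicalSpace.NoetherianSpace.exists_finite_set_closeds_irreducible Z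
    have hcoe : (Z : Set (PrimeSpectrum A)) = ⋃ t ∈ S, (t : Set (PrimeSpectrum A)) := by
      rw [hZ]
      simp only [TopologicalSpace.Closeds.coe_sSup, Set.sUnion_image]
      exact (Set.Finite.isClosed_biUnion hSf (fun t _ => t.isClosed')).closure_eq
    have hunion : {x : PrimeSpectrum A | γ ≤ f x} ∩ Z
        = ⋃ t ∈ S, ({x : PrimeSpectrum A | γ ≤ f x} ∩ t) := by
      rw [hcoe, Set.inter_iUnion₂]
    rw [hunion]
    apply Set.Finite.isClosed_biUnion hSf
    intro t ht
    have htZ : t ≤ Z := hZ ▸ le_sSup ht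
    have hirr := hSirr t ht
    set y := hirr.genericPoint with hy
    have hgen : closure ({y} : Set (PrimeSpectrum A)) = (t : Set (PrimeSpectrum A)) :=
      hirr.isGenericPoint_genericPoint t.isClosed'
    by_cases hfy : γ ≤ f y
    · have : {x : PrimeSpectrum A | γ ≤ f x} ∩ t = (t : Set (PrimeSpectrum A)) := by
        apply Set.inter_eq_right.mpr
        intro x hx
        exact le_trans hfy (h1 y x (hgen ▸ hx))
      rw [this]; exact t.isClosed'
    · obtain ⟨U, hUopen, hUne, hUle⟩ := h2 y
      set W : TopologicalSpace.Closeds (PrimeSpectrum A) :=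
        t ⊓ ⟨Uᶜ, hUopen.isClosed_compl⟩ with hW
      have hWlt : W < Z := by
        refine lt_of_lt_of_le ?_ htZ
        refine lt_of_le_of_ne inf_le_left ?_
        intro hWt
        obtain ⟨p, hpt, hpU⟩ := hUne
        rw [hgen] at hpt
        have : p ∈ (W : Set (PrimeSpectrum A)) := hWt ▸ hpt
        exact this.2 hpU
      have heq : {x : PrimeSpectrum A | γ ≤ f x} ∩ t
          = {x : PrimeSpectrum A | γ ≤ f x} ∩ W := by
        ext x
        constructor
        · rintro ⟨hxf, hxt⟩
          refine ⟨hxf, hxt, fun hxU => ?_⟩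
          have := hUle x ⟨hgen ▸ hxt, hxU⟩
          exact absurd hxf (not_le.mpr (lt_of_le_of_lt this (not_le.mp hfy)))
        · rintro ⟨hxf, hxt, _⟩
          exact ⟨hxf, hxt⟩
      rw [heq]
      exact IH W hWlt
  have := key ⊤
  simpa using this
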